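/- Assume: consistency for a=0,1; trial exchangeability over A for a=0,1 with trial positivity; conditional exchangeability over A in the third source for a=0 (E[Y⁰|X=x,S=2]=E[Y⁰|X=x,S=2,A=0]) with positivity P(A=0|X=x,S=2)>0; positivity P(S=1|X=x)>0 for x with P(X=x,S=2)>0; and transportability of conditional relative effects from the trial: E[Y¹|X=x,S=2]/E[Y⁰|X=x,S=2] = E[Y¹|X=x,S=1]/E[Y⁰|X=x,S=1] whenever the relevant joint probabilities are positive, with all these conditional means nonzero. Then E[Y¹ | S=2] = ρ*₁ := Σ_x E[Y|X=x,S=2,A=0] · (E[Y|X=x,S=1,A=1] / E[Y|X=x,S=1,A=0]) · P(X=x | S=2), summing over x with P(X=x,S=2)>0. -/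
import Mathlib


open Finset
open scoped Classical

noncomputable def pr {Ω : Type*} [Fintype Ω] (P : Ω → ℝ) (E : Ω → Prop) : ℝ :=
  ∑ ω, if E ω then P ω else 0

noncomputable def cexp {Ω : Type*} [Fintype Ω] (P : Ω → ℝ) (Y : Ω → ℝ) (E : Ω → Prop) : ℝ :=
  (∑ ω, if E ω then Y ω * P ω else 0) / pr P E

noncomputable def cpr {Ω : Type*} [Fintype Ω] (P : Ω → ℝ) (E F : Ω → Prop) : ℝ :=
  pr P (fun ω => E ω ∧ F ω) / pr P F

lemma pr_nonneg {Ω : Type*} [Fintype Ω] (P : Ω → ℝ) (hP : ∀ ω, 0 ≤ P ω) (E : Ω → Prop) :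
    0 ≤ pr P E := by
  apply Finset.sum_nonneg; intro ω _; split <;> simp [hP ω]

lemma pr_zero_imp {Ω : Type*} [Fintype Ω] (P : Ω → ℝ) (hP : ∀ ω, 0 ≤ P ω) (E : Ω → Prop)
    (h : pr P E = 0) : ∀ ω, E ω → P ω = 0 := by
  intro ω hω
  have := (Finset.sum_eq_zero_iff_of_nonneg (by intro i _; split <;> simp [hP i])).mp h ω (Finset.mem_univ ω)
  simpa [hω] using this

lemma cexp_congr {Ω : Type*} [Fintype Ω] (P : Ω → ℝ) (Y Z : Ω → ℝ) (E : Ω → Prop)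
    (h : ∀ ω, E ω → Y ω = Z ω) : cexp P Y E = cexp P Z E := by
  unfold cexp
  congr 1
  apply Finset.sum_congr rfl
  intro ω _
  by_cases hω : E ω <;> simp [hω, h]

theorem stmt17    {Ω 𝓧 : Type*} [Fintype Ω] [Fintype 𝓧]
    (P : Ω → ℝ) (hP : ∀ ω, 0 ≤ P ω) (hPsum : ∑ ω, P ω = 1)
    (X : Ω → 𝓧) (S : Ω → ℕ) (A : Ω → ℕ) (Y : Ω → ℝ)
    (Y0 Y1 : Ω → ℝ)
    (hS2 : 0 < pr P (fun ω => S ω = 2))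
    (hcons0 : ∀ ω, A ω = 0 → Y0 ω = Y ω)
    (hcons1 : ∀ ω, A ω = 1 → Y1 ω = Y ω)
    (hexch0 : ∀ x, 0 < pr P (fun ω => X ω = x ∧ S ω = 1) → cexp P Y0 (fun ω => X ω = x ∧ S ω = 1) = cexp P Y0 (fun ω => X ω = x ∧ S ω = 1 ∧ A ω = 0))
    (hexch1 : ∀ x, 0 < pr P (fun ω => X ω = x ∧ S ω = 1) → cexp P Y1 (fun ω => X ω = x ∧ S ω = 1) = cexp P Y1 (fun ω => X ω = x ∧ S ω = 1 ∧ A ω = 1))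
    (hpos0 : ∀ x, 0 < pr P (fun ω => X ω = x ∧ S ω = 1) → 0 < cpr P (fun ω => A ω = 0) (fun ω => X ω = x ∧ S ω = 1))
    (hpos1 : ∀ x, 0 < pr P (fun ω => X ω = x ∧ S ω = 1) → 0 < cpr P (fun ω => A ω = 1) (fun ω => X ω = x ∧ S ω = 1))
    (hexchS2 : ∀ x, 0 < pr P (fun ω => X ω = x ∧ S ω = 2) → cexp P Y0 (fun ω => X ω = x ∧ S ω = 2) = cexp P Y0 (fun ω => X ω = x ∧ S ω = 2 ∧ A ω = 0))
    (hposS2 : ∀ x, 0 < pr P (fun ω => X ω = x ∧ S ω = 2) → 0 < cpr P (fun ω => A ω = 0) (fun ω => X ω = x ∧ S ω = 2))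
    (hpos1x : ∀ x, 0 < pr P (fun ω => X ω = x ∧ S ω = 2) → 0 < cpr P (fun ω => S ω = 1) (fun ω => X ω = x))
    (htransratio : ∀ x, 0 < pr P (fun ω => X ω = x ∧ S ω = 2) → 0 < pr P (fun ω => X ω = x ∧ S ω = 1) →
      cexp P Y1 (fun ω => X ω = x ∧ S ω = 2) / cexp P Y0 (fun ω => X ω = x ∧ S ω = 2) =
      cexp P Y1 (fun ω => X ω = x ∧ S ω = 1) / cexp P Y0 (fun ω => X ω = x ∧ S ω = 1))
    (hne : ∀ x, 0 < pr P (fun ω => X ω = x ∧ S ω = 2) → 0 < pr P (fun ω => X ω = x ∧ S ω = 1) →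
      cexp P Y0 (fun ω => X ω = x ∧ S ω = 2) ≠ 0 ∧ cexp P Y0 (fun ω => X ω = x ∧ S ω = 1) ≠ 0 ∧
      cexp P Y1 (fun ω => X ω = x ∧ S ω = 1) ≠ 0 ∧ cexp P Y (fun ω => X ω = x ∧ S ω = 1 ∧ A ω = 0) ≠ 0)
    : cexp P Y1 (fun ω => S ω = 2) =
      ∑ x ∈ univ.filter (fun x => 0 < pr P (fun ω => X ω = x ∧ S ω = 2)),
        cexp P Y (fun ω => X ω = x ∧ S ω = 2 ∧ A ω = 0) *
        (cexp P Y (fun ω => X ω = x ∧ S ω = 1 ∧ A ω = 1) / cexp P Y (fun ω => X ω = x ∧ S ω = 1 ∧ A ω = 0)) *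
        (pr P (fun ω => X ω = x ∧ S ω = 2) / pr P (fun ω => S ω = 2)) := by
  classical
  have hdecomp : (∑ ω, if S ω = 2 then Y1 ω * P ω else 0)
      = ∑ x : 𝓧, ∑ ω, if X ω = x ∧ S ω = 2 then Y1 ω * P ω else 0 := by
    symm
    rw [Finset.sum_comm]
    apply Finset.sum_congr rfl
    intro ω _
    by_cases hs : S ω = 2
    · simp [hs, Finset.sum_ite_eq]
    · simp [hs]
  have hfilter : (∑ x : 𝓧, ∑ ω, if X ω = x ∧ S ω = 2 then Y1 ω * P ω else 0)
      = ∑ x ∈ univ.filter (fun x => 0 < pr P (fun ω => X ω = x ∧ S ω = 2)),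
          ∑ ω, if X ω = x ∧ S ω = 2 then Y1 ω * P ω else 0 := by
    symm
    apply Finset.sum_subset (Finset.filter_subset _ _)
    intro x _ hx
    have h0 : pr P (fun ω => X ω = x ∧ S ω = 2) = 0 := by
      rcases (pr_nonneg P hP (fun ω => X ω = x ∧ S ω = 2)).eq_or_lt with h | h
      · exact h.symm
      · exact absurd h (by simpa using hx)
    apply Finset.sum_eq_zero
    intro ω _
    by_cases hω : X ω = x ∧ S ω = 2
    · simp [hω, pr_zero_imp P hP _ h0 ω hω]
    · simp [hω]
  have hmain : cexp P Y1 (fun ω => S ω = 2)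
      = ∑ x ∈ univ.filter (fun x => 0 < pr P (fun ω => X ω = x ∧ S ω = 2)),
          (∑ ω, if X ω = x ∧ S ω = 2 then Y1 ω * P ω else 0) / pr P (fun ω => S ω = 2) := by
    unfold cexp
    rw [← Finset.sum_div, ← hfilter, ← hdecomp]
    congr!
  rw [hmain]
  apply Finset.sum_congr rfl
  intro x hxmem
  have hx2 : 0 < pr P (fun ω => X ω = x ∧ S ω = 2) := (Finset.mem_filter.mp hxmem).2
  -- positivity of the trial stratum
  have hq := hpos1x x hx2
  have hnum : pr P (fun ω => S ω = 1 ∧ X ω = x) ≠ 0 := by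
    intro h
    rw [cpr, h, zero_div] at hq
    exact lt_irrefl 0 hq
  have hx1 : 0 < pr P (fun ω => X ω = x ∧ S ω = 1) := by
    have heq : pr P (fun ω => X ω = x ∧ S ω = 1) = pr P (fun ω => S ω = 1 ∧ X ω = x) := by
      unfold pr
      apply Finset.sum_congr rfl
      intro ω _
      simp [and_comm]
    rw [heq]
    exact lt_of_le_of_ne (pr_nonneg P hP _) (Ne.symm hnum)
  obtain ⟨hb, hd, hc, _⟩ := hne x hx2 hx1
  have htr := htransratio x hx2 hx1
  have ha : cexp P Y1 (fun ω => X ω = x ∧ S ω = 2)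
      = cexp P Y0 (fun ω => X ω = x ∧ S ω = 2) *
        (cexp P Y1 (fun ω => X ω = x ∧ S ω = 1) / cexp P Y0 (fun ω => X ω = x ∧ S ω = 1)) := by
    rw [div_eq_div_iff hb hd] at htr
    field_simp
    linarith [htr]
  have hbY : cexp P Y0 (fun ω => X ω = x ∧ S ω = 2)
      = cexp P Y (fun ω => X ω = x ∧ S ω = 2 ∧ A ω = 0) := by
    rw [hexchS2 x hx2]
    exact cexp_congr _ _ _ _ (fun ω h => hcons0 ω h.2.2)
  have hcY : cexp P Y1 (fun ω => X ω = x ∧ S ω = 1)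
      = cexp P Y (fun ω => X ω = x ∧ S ω = 1 ∧ A ω = 1) := by
    rw [hexch1 x hx1]
    exact cexp_congr _ _ _ _ (fun ω h => hcons1 ω h.2.2)
  have hdY : cexp P Y0 (fun ω => X ω = x ∧ S ω = 1)
      = cexp P Y (fun ω => X ω = x ∧ S ω = 1 ∧ A ω = 0) := by
    rw [hexch0 x hx1]
    exact cexp_congr _ _ _ _ (fun ω h => hcons0 ω h.2.2)
  have hNx : (∑ ω, if X ω = x ∧ S ω = 2 then Y1 ω * P ω else 0)
      = cexp P Y1 (fun ω => X ω = x ∧ S ω = 2) * pr P (fun ω => X ω = x ∧ S ω = 2) := by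
    unfold cexp
    have : (∑ ω, if X ω = x ∧ S ω = 2 then Y1 ω * P ω else 0)
        = ∑ ω, if (fun ω => X ω = x ∧ S ω = 2) ω then Y1 ω * P ω else 0 :=
      Finset.sum_congr rfl fun ω _ => if_congr Iff.rfl rfl rfl
    rw [← this, div_mul_cancel₀ _ (ne_of_gt hx2)]
    exact Finset.sum_congr rfl fun ω _ => by congr
  rw [hNx, ha, hbY, hcY, hdY, mul_div_assoc]
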